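/- In the setting where delta(J) = dim(gamma + sum_{j in J} kappa_j) - |J| for polytopes, with min_J delta(J) = 0 and J_0 the maximal element of {J : delta(J)=0}: for any J with delta(J) = 1, either J ⊆ J_0, or J is contained in exactly one maximal element of the set {J' : delta(J') = 1, J_0 ⊆ J'}. -/

import Mathlib

open scoped Pointwise

/-- A polytope: the convex hull of a nonempty finite set of points. -/
def IsPolytope {V : Type*} [AddCommGroup V] [Module ℝ V] (P : Set V) : Prop :=
  ∃ s : Finset V, s.Nonempty ∧ P = convexHull ℝ (s : Set V)

/-- The dimension of (the affine span of) a subset of a real vector space. -/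
noncomputable def polyDim {V : Type*} [AddCommGroup V] [Module ℝ V] (P : Set V) : ℕ :=
  Module.finrank ℝ (affineSpan ℝ P).direction

/-- `δ(J) = dim(γ + ∑_{j ∈ J} κ_j) - |J|`. -/
noncomputable def deltaFn {V : Type*} [AddCommGroup V] [Module ℝ V] {m : ℕ}
    (γ : Set V) (κ : Fin m → Set V) (J : Finset (Fin m)) : ℤ :=
  (polyDim (γ + ∑ j ∈ J, κ j) : ℤ) - J.card

section Aux

variable {V : Type*} [AddCommGroup V] [Module ℝ V]

lemma vectorSpan_add_set (A B : Set V) (hA : A.Nonempty) (hB : B.Nonempty) :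
    vectorSpan ℝ (A + B) = vectorSpan ℝ A ⊔ vectorSpan ℝ B := by
  simp only [vectorSpan_def]
  apply le_antisymm
  · rw [Submodule.span_le]
    rintro v hv
    rw [Set.mem_vsub] at hv
    obtain ⟨x, hx, y, hy, rfl⟩ := hv
    rw [Set.mem_add] at hx hy
    obtain ⟨a, ha, b, hb, rfl⟩ := hx
    obtain ⟨a', ha', b', hb', rfl⟩ := hy
    have h : (a + b) -ᵥ (a' + b') = (a -ᵥ a') + (b -ᵥ b') := by
      simp only [vsub_eq_sub]; abel
    rw [SetLike.mem_coe, h]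
    exact Submodule.add_mem _
      (Submodule.mem_sup_left (Submodule.subset_span ⟨a, ha, a', ha', rfl⟩))
      (Submodule.mem_sup_right (Submodule.subset_span ⟨b, hb, b', hb', rfl⟩))
  · obtain ⟨b₀, hb₀⟩ := hB
    obtain ⟨a₀, ha₀⟩ := hA
    apply sup_le
    · rw [Submodule.span_le]
      rintro v hv
      rw [Set.mem_vsub] at hv
      obtain ⟨a, ha, a', ha', rfl⟩ := hv
      apply Submodule.subset_span
      refine ⟨a + b₀, Set.add_mem_add ha hb₀, a' + b₀, Set.add_mem_add ha' hb₀, ?_⟩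
      simp only [vsub_eq_sub]; abel
    · rw [Submodule.span_le]
      rintro v hv
      rw [Set.mem_vsub] at hv
      obtain ⟨b, hb, b', hb', rfl⟩ := hv
      apply Submodule.subset_span
      refine ⟨a₀ + b, Set.add_mem_add ha₀ hb, a₀ + b', Set.add_mem_add ha₀ hb', ?_⟩
      simp only [vsub_eq_sub]; abel

omit [Module ℝ V] in
lemma sum_set_nonempty {m : ℕ} (κ : Fin m → Set V) (hκ : ∀ j, (κ j).Nonempty)
    (J : Finset (Fin m)) : (∑ j ∈ J, κ j).Nonempty := by
  classical
  induction J using Finset.induction_on with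
  | empty => exact ⟨0, rfl⟩
  | insert _ _ h ih =>
    rw [Finset.sum_insert h]
    exact (hκ _).add ih

lemma vectorSpan_gamma_sum {m : ℕ} (γ : Set V) (hγ : γ.Nonempty)
    (κ : Fin m → Set V) (hκ : ∀ j, (κ j).Nonempty) (J : Finset (Fin m)) :
    vectorSpan ℝ (γ + ∑ j ∈ J, κ j) =
      vectorSpan ℝ γ ⊔ J.sup (fun j => vectorSpan ℝ (κ j)) := by
  classical
  induction J using Finset.induction_on with
  | empty => simp
  | @insert a J h ih =>
    rw [Finset.sum_insert h, Finset.sup_insert]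
    have hrw : γ + (κ a + ∑ j ∈ J, κ j) = (γ + ∑ j ∈ J, κ j) + κ a := by
      rw [add_comm (κ a), ← add_assoc]
    rw [hrw, vectorSpan_add_set _ _ (hγ.add (sum_set_nonempty κ hκ J)) (hκ a), ih,
      sup_assoc, sup_comm (J.sup _) (vectorSpan ℝ (κ a))]

lemma IsPolytope.nonempty {P : Set V} (hP : IsPolytope P) : P.Nonempty := by
  obtain ⟨s, hs, rfl⟩ := hP
  exact hs.to_set.mono (subset_convexHull ℝ _)

lemma IsPolytope.finiteDimensional {P : Set V} (hP : IsPolytope P) :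
    FiniteDimensional ℝ (vectorSpan ℝ P) := by
  obtain ⟨s, hs, rfl⟩ := hP
  rw [← direction_affineSpan, affineSpan_convexHull, direction_affineSpan]
  exact finiteDimensional_vectorSpan_of_finite ℝ s.finite_toSet

end Aux

/-- Suppose `δ(J) ≥ 0` for all `J`, `min_J δ(J) = 0`, and `J₀` is the
maximal element of `{J : δ(J) = 0}`.  Then any `J` with `δ(J) = 1` satisfies `J ⊆ J₀`, or
is contained in exactly one maximal element of `{J' : δ(J') = 1 ∧ J₀ ⊆ J'}`. -/
theorem delta_one_containment {V : Type*} [AddCommGroup V] [Module ℝ V]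
    (k : ℕ) (γ : Set V) (κ : Fin (k - 1) → Set V)
    (hγ : IsPolytope γ) (hκ : ∀ j, IsPolytope (κ j))
    (h0 : ∀ J : Finset (Fin (k - 1)), 0 ≤ deltaFn γ κ J)
    (J₀ : Finset (Fin (k - 1)))
    (hJ₀ : deltaFn γ κ J₀ = 0 ∧ ∀ J, deltaFn γ κ J = 0 → J ⊆ J₀)
    (J : Finset (Fin (k - 1))) (hJ : deltaFn γ κ J = 1) :
    J ⊆ J₀ ∨
      ∃! M : Finset (Fin (k - 1)),
        ((deltaFn γ κ M = 1 ∧ J₀ ⊆ M) ∧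
          ∀ M', deltaFn γ κ M' = 1 → J₀ ⊆ M' → M ⊆ M' → M = M') ∧ J ⊆ M := by
  classical
  -- setup
  set S₀ : Submodule ℝ V := vectorSpan ℝ γ with hS₀
  set W : Fin (k - 1) → Submodule ℝ V := fun j => vectorSpan ℝ (κ j) with hW
  have hfd₀ : FiniteDimensional ℝ S₀ := hγ.finiteDimensional
  have hfdW : ∀ j, FiniteDimensional ℝ (W j) := fun j => (hκ j).finiteDimensional
  have hfd : ∀ I : Finset (Fin (k - 1)),
      FiniteDimensional ℝ (S₀ ⊔ I.sup W : Submodule ℝ V) := by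
    intro I
    induction I using Finset.induction_on with
    | empty => rw [Finset.sup_empty, sup_bot_eq]; exact hfd₀
    | @insert a I h ih =>
      rw [Finset.sup_insert, ← sup_assoc, sup_comm S₀ (W a), sup_assoc]
      have := hfdW a
      exact Submodule.finiteDimensional_sup _ _
  have hdim : ∀ I : Finset (Fin (k - 1)),
      polyDim (γ + ∑ j ∈ I, κ j) = Module.finrank ℝ (S₀ ⊔ I.sup W : Submodule ℝ V) := by
    intro I
    unfold polyDim
    rw [direction_affineSpan,
      vectorSpan_gamma_sum γ hγ.nonempty κ (fun j => (hκ j).nonempty) I]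
  -- submodularity
  have submod : ∀ I₁ I₂ : Finset (Fin (k - 1)),
      deltaFn γ κ (I₁ ∩ I₂) + deltaFn γ κ (I₁ ∪ I₂) ≤ deltaFn γ κ I₁ + deltaFn γ κ I₂ := by
    intro I₁ I₂
    have hU : (S₀ ⊔ I₁.sup W) ⊔ (S₀ ⊔ I₂.sup W) = S₀ ⊔ (I₁ ∪ I₂).sup W := by
      rw [Finset.sup_union, sup_sup_sup_comm, sup_idem]
    have hI : (S₀ ⊔ (I₁ ∩ I₂).sup W) ≤ (S₀ ⊔ I₁.sup W) ⊓ (S₀ ⊔ I₂.sup W) := by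
      exact le_inf (sup_le_sup_left (Finset.sup_mono Finset.inter_subset_left) S₀)
        (sup_le_sup_left (Finset.sup_mono Finset.inter_subset_right) S₀)
    have h1 := hfd I₁
    have h2 := hfd I₂
    have h3 := hfd (I₁ ∪ I₂)
    have h4 := hfd (I₁ ∩ I₂)
    have key : Module.finrank ℝ (S₀ ⊔ (I₁ ∩ I₂).sup W : Submodule ℝ V) +
        Module.finrank ℝ (S₀ ⊔ (I₁ ∪ I₂).sup W : Submodule ℝ V) ≤
        Module.finrank ℝ (S₀ ⊔ I₁.sup W : Submodule ℝ V) +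
        Module.finrank ℝ (S₀ ⊔ I₂.sup W : Submodule ℝ V) := by
      have heq := Submodule.finrank_sup_add_finrank_inf_eq (S₀ ⊔ I₁.sup W) (S₀ ⊔ I₂.sup W)
      have hmono : Module.finrank ℝ (S₀ ⊔ (I₁ ∩ I₂).sup W : Submodule ℝ V) ≤
          Module.finrank ℝ ((S₀ ⊔ I₁.sup W) ⊓ (S₀ ⊔ I₂.sup W) : Submodule ℝ V) :=
        Submodule.finrank_mono hI
      rw [hU] at heq
      omega
    have hcard : (I₁ ∩ I₂).card + (I₁ ∪ I₂).card = I₁.card + I₂.card := by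
      rw [add_comm]
      exact Finset.card_union_add_card_inter I₁ I₂
    unfold deltaFn
    rw [hdim I₁, hdim I₂, hdim (I₁ ∩ I₂), hdim (I₁ ∪ I₂)]
    have : ((I₁ ∩ I₂).card : ℤ) + (I₁ ∪ I₂).card = (I₁.card : ℤ) + I₂.card := by
      exact_mod_cast hcard
    omega
  -- combinatorial part
  by_cases hsub : J ⊆ J₀
  · exact Or.inl hsub
  right
  obtain ⟨hJ₀0, hJ₀max⟩ := hJ₀
  have hge1 : ∀ K : Finset (Fin (k - 1)), J ∪ J₀ ⊆ K → 1 ≤ deltaFn γ κ K := by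
    intro K hK
    rcases lt_or_eq_of_le (h0 K) with h | h
    · omega
    · exfalso
      exact hsub fun x hx => hJ₀max K h.symm (hK (Finset.mem_union_left _ hx))
  have hJJ₀ : deltaFn γ κ (J ∪ J₀) = 1 := by
    have := submod J J₀
    have h1 := h0 (J ∩ J₀)
    have h2 := hge1 (J ∪ J₀) (le_refl _)
    omega
  -- the collection T
  set p : Finset (Fin (k - 1)) → Prop := fun K => deltaFn γ κ K = 1 ∧ J ∪ J₀ ⊆ K with hp
  have hclosed : ∀ A, p A → ∀ B, p B → p (A ⊔ B) := by
    rintro A ⟨hA1, hA2⟩ B ⟨hB1, hB2⟩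
    have hABi : 1 ≤ deltaFn γ κ (A ∩ B) :=
      hge1 _ (Finset.subset_inter hA2 hB2)
    have hABu : 1 ≤ deltaFn γ κ (A ∪ B) :=
      hge1 _ (hA2.trans Finset.subset_union_left)
    have := submod A B
    constructor
    · show deltaFn γ κ (A ∪ B) = 1
      omega
    · exact hA2.trans Finset.subset_union_left
  set F : Finset (Finset (Fin (k - 1))) :=
    Finset.univ.filter (fun K => deltaFn γ κ K = 1 ∧ J ∪ J₀ ⊆ K) with hF
  have hmemF : ∀ K, K ∈ F ↔ p K := by
    intro K
    simp [hF, hp]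
  have hFne : F.Nonempty := ⟨J ∪ J₀, (hmemF _).mpr ⟨hJJ₀, le_refl _⟩⟩
  set M : Finset (Fin (k - 1)) := F.sup' hFne id with hM
  have hMp : p M := by
    apply Finset.sup'_induction hFne id hclosed
    intro b hb
    exact (hmemF b).mp hb
  have hMmax : ∀ K, p K → K ⊆ M := by
    intro K hK
    exact Finset.le_sup' id ((hmemF K).mpr hK)
  obtain ⟨hM1, hM2⟩ := hMp
  refine ⟨M, ⟨⟨⟨hM1, (Finset.subset_union_right).trans hM2⟩, ?_⟩,
    (Finset.subset_union_left).trans hM2⟩, ?_⟩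
  · intro M' hM'1 hM'2 hMM'
    have : p M' := ⟨hM'1, Finset.union_subset
      (((Finset.subset_union_left).trans hM2).trans hMM') hM'2⟩
    exact Finset.Subset.antisymm hMM' (hMmax M' this)
  · rintro N ⟨⟨⟨hN1, hN2⟩, hNmax⟩, hJN⟩
    have hpN : p N := ⟨hN1, Finset.union_subset hJN hN2⟩
    have hNM : N ⊆ M := hMmax N hpN
    exact hNmax M hM1 ((Finset.subset_union_right).trans hM2) hNM
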